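/- arXiv:2103.14665 — 6 statements merged into one kernel-verified Lean document; each statement's English description precedes it below -/
import Mathlib

section
/- For every u ∈ ℝ³ with u·n > 0, the Cercignani–Lampis scattering kernel is a probability density on the incoming velocities: ∫_{{v ∈ ℝ³ : v·n < 0}} R(u→v) dv = 1 (the integral is with respect to three-dimensional Lebesgue measure). -/
open MeasureTheory

open Real Set in
private lemma gauss1 (σ c : ℝ) (hσ : 0 < σ) :
    ∫ x : ℝ, Real.exp (-(x - c)^2 / (2*σ)) = Real.sqrt (2*Real.pi*σ) := by
  have h := MeasureTheory.integral_sub_right_eq_self (μ := volume)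
    (fun x : ℝ => Real.exp (-x^2 / (2*σ))) c
  rw [h]
  have : ∀ x : ℝ, Real.exp (-x^2/(2*σ)) = Real.exp (-(1/(2*σ)) * x^2) := by
    intro x; ring_nf
  simp_rw [this]
  rw [integral_gaussian]
  congr 1
  field_simp

/-- The modified Bessel function `I₀(y) = (1/π) ∫₀^π e^{y cos φ} dφ`. -/
noncomputable def besselI0 (y : ℝ) : ℝ :=
  (1 / Real.pi) * ∫ φ in (0:ℝ)..Real.pi, Real.exp (y * Real.cos φ)

open Real Set in
private lemma besselI0_neg (y : ℝ) : besselI0 (-y) = besselI0 y := by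
  unfold besselI0
  congr 1
  have := intervalIntegral.integral_comp_sub_left (a := (0:ℝ)) (b := Real.pi)
    (f := fun x => Real.exp (y * Real.cos x)) Real.pi
  simp only [sub_zero, sub_self] at this
  rw [← this]
  congr 1
  ext x
  rw [Real.cos_pi_sub]
  ring_nf

open Real Set in
private lemma angle_int (c : ℝ) :
    ∫ θ in Ioo (-Real.pi) Real.pi, Real.exp (c * Real.cos θ)
      = 2 * Real.pi * besselI0 c := by
  have hc : Continuous fun θ : ℝ => Real.exp (c * Real.cos θ) := by continuity
  rw [← MeasureTheory.integral_Ioc_eq_integral_Ioo,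
    ← intervalIntegral.integral_of_le (by linarith [Real.pi_pos] : -Real.pi ≤ Real.pi)]
  have hsplit := intervalIntegral.integral_add_adjacent_intervals
    (a := -Real.pi) (b := 0) (c := Real.pi)
    (hc.intervalIntegrable (μ := volume) _ _) (hc.intervalIntegrable (μ := volume) _ _)
  rw [← hsplit]
  have hneg : ∫ x in (-Real.pi)..(0:ℝ), Real.exp (c * Real.cos x)
      = ∫ x in (0:ℝ)..Real.pi, Real.exp (c * Real.cos x) := by
    have := intervalIntegral.integral_comp_neg (a := (0:ℝ)) (b := Real.pi)
      (f := fun x => Real.exp (c * Real.cos x))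
    simp only [Real.cos_neg, neg_zero] at this
    rw [← this]
  rw [hneg, besselI0]
  have hπ : Real.pi ≠ 0 := Real.pi_ne_zero
  field_simp
  ring

open Real Set in
private lemma g1_integrable {σ a : ℝ} (hσ : 0 < σ) :
    Integrable (fun x : ℝ => x * Real.exp (-(x - a)^2 / (2*σ))) := by
  have hb : 0 < 1/(2*σ) := by positivity
  have h1 : Integrable (fun x : ℝ => (x + a) * Real.exp (-(1/(2*σ)) * x^2)) := by
    have := (integrable_mul_exp_neg_mul_sq hb).add
      ((integrable_exp_neg_mul_sq hb).const_mul a)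
    refine this.congr (Filter.Eventually.of_forall fun x => ?_)
    simp only [Pi.add_apply]
    ring
  have h2 := h1.comp_sub_right a
  refine h2.congr (Filter.Eventually.of_forall fun x => ?_)
  simp only [sub_add_cancel]
  congr 1
  ring

open Real Set in
private lemma bessel_norm (σ a : ℝ) (hσ : 0 < σ) (ha : 0 ≤ a) :
    ∫ r in Ioi (0:ℝ), r * Real.exp (-(r^2 + a^2)/(2*σ)) * besselI0 (r*a/σ) = σ := by
  have hπ := Real.pi_pos
  have hfull : ∫ p : ℝ × ℝ, Real.exp (-((p.1 - a)^2 + p.2^2)/(2*σ)) = 2 * Real.pi * σ := by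
    have h1 : ∀ q : ℝ × ℝ, Real.exp (-((q.1 - a)^2 + q.2^2)/(2*σ))
        = Real.exp (-(q.1-a)^2/(2*σ)) * Real.exp (-(q.2-0)^2/(2*σ)) := by
      intro q
      rw [← Real.exp_add]; congr 1; ring
    simp_rw [h1]
    rw [Measure.volume_eq_prod,
      MeasureTheory.integral_prod_mul (fun x : ℝ => Real.exp (-(x-a)^2/(2*σ)))
        (fun y : ℝ => Real.exp (-(y-0)^2/(2*σ))), gauss1 σ a hσ, gauss1 σ 0 hσ]
    exact Real.mul_self_sqrt (by positivity)
  have hpolar := integral_comp_polarCoord_symm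
    (fun q : ℝ × ℝ => Real.exp (-((q.1 - a)^2 + q.2^2)/(2*σ)))
  have hkey : ∀ p : ℝ × ℝ, p.1 • Real.exp (-(((polarCoord.symm p).1 - a)^2
        + (polarCoord.symm p).2^2)/(2*σ))
      = (p.1 * Real.exp (-(p.1^2 + a^2)/(2*σ))) * Real.exp ((p.1*a/σ) * Real.cos p.2) := by
    rintro ⟨r, θ⟩
    have hs := Real.sin_sq_add_cos_sq θ
    simp only [polarCoord_symm_apply, smul_eq_mul]
    rw [mul_assoc, ← Real.exp_add]
    congr 1
    have h2 : (r * Real.sin θ)^2 = r^2 - (r * Real.cos θ)^2 := by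
      linear_combination r^2 * hs
    rw [h2]
    field_simp
    ring
  simp_rw [hkey] at hpolar
  rw [show polarCoord.target = Ioi (0:ℝ) ×ˢ Ioo (-Real.pi) Real.pi from rfl] at hpolar
  haveI : IsFiniteMeasure (volume.restrict (Ioo (-Real.pi) Real.pi)) :=
    ⟨by rw [Measure.restrict_apply_univ]; exact measure_Ioo_lt_top⟩
  have hbound : Integrable (fun p : ℝ × ℝ => p.1 * Real.exp (-(p.1 - a)^2/(2*σ)))
      ((volume.restrict (Ioi (0:ℝ))).prod (volume.restrict (Ioo (-Real.pi) Real.pi))) := by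
    have := ((g1_integrable (a := a) hσ).restrict (s := Ioi 0)).mul_prod
      ((integrable_const (1:ℝ)) : Integrable (fun _ : ℝ => (1:ℝ))
        (volume.restrict (Ioo (-Real.pi) Real.pi)))
    refine this.congr (Filter.Eventually.of_forall fun p => ?_)
    ring
  have hgint : Integrable
      (fun p : ℝ × ℝ => (p.1 * Real.exp (-(p.1^2 + a^2)/(2*σ)))
        * Real.exp ((p.1*a/σ) * Real.cos p.2))
      ((volume.restrict (Ioi (0:ℝ))).prod (volume.restrict (Ioo (-Real.pi) Real.pi))) := by
    refine hbound.mono ?_ ?_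
    · exact ((continuous_fst.mul (by fun_prop)).mul (by fun_prop)).aestronglyMeasurable
    · rw [Measure.prod_restrict]
      refine (ae_restrict_iff' ((measurableSet_Ioi).prod measurableSet_Ioo)).2 ?_
      refine Filter.Eventually.of_forall ?_
      rintro ⟨r, θ⟩ hp
      obtain ⟨hr, hθ⟩ := hp
      simp only [mem_Ioi] at hr
      have h1 : (r*a/σ) * Real.cos θ ≤ r*a/σ :=
        mul_le_of_le_one_right (by positivity) (Real.cos_le_one θ)
      have h2 : -(r^2 + a^2)/(2*σ) + (r*a/σ) = -(r - a)^2/(2*σ) := by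
        field_simp; ring
      have hgle : r * Real.exp (-(r^2 + a^2)/(2*σ)) * Real.exp ((r*a/σ) * Real.cos θ)
          ≤ r * Real.exp (-(r - a)^2/(2*σ)) := by
        rw [mul_assoc, ← Real.exp_add]
        exact mul_le_mul_of_nonneg_left
          (Real.exp_le_exp.2 (by linarith)) hr.le
      rw [Real.norm_eq_abs, Real.norm_eq_abs,
        abs_of_nonneg (by positivity), abs_of_nonneg (by positivity)]
      exact hgle
  have hfub := MeasureTheory.integral_prod _ hgint
  rw [Measure.prod_restrict, ← Measure.volume_eq_prod] at hfub
  rw [hfub] at hpolar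
  have hinner : ∀ r ∈ Ioi (0:ℝ),
      ∫ θ in Ioo (-Real.pi) Real.pi,
          (r * Real.exp (-(r^2+a^2)/(2*σ))) * Real.exp ((r*a/σ) * Real.cos θ)
        = (2*Real.pi) * (r * Real.exp (-(r^2+a^2)/(2*σ)) * besselI0 (r*a/σ)) := by
    intro r _
    rw [integral_const_mul, angle_int]
    ring
  rw [setIntegral_congr_fun measurableSet_Ioi hinner, integral_const_mul, hfull] at hpolar
  have h2π : (0:ℝ) < 2*Real.pi := by positivity
  nlinarith [hpolar]

open Real Set in
private lemma bessel_norm_neg (σ a : ℝ) (hσ : 0 < σ) (ha : 0 ≤ a) :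
    ∫ x in Iio (0:ℝ), |x| * Real.exp (-(x^2 + a^2)/(2*σ)) * besselI0 (x*a/σ) = σ := by
  have h := integral_comp_neg_Ioi (0:ℝ)
    (fun x => |x| * Real.exp (-(x^2 + a^2)/(2*σ)) * besselI0 (x*a/σ))
  rw [neg_zero] at h
  rw [← integral_Iic_eq_integral_Iio, ← h]
  have hcong : ∀ x ∈ Ioi (0:ℝ),
      |(-x)| * Real.exp (-((-x)^2 + a^2)/(2*σ)) * besselI0 ((-x)*a/σ)
        = x * Real.exp (-(x^2 + a^2)/(2*σ)) * besselI0 (x*a/σ) := by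
    intro x hx
    simp only [mem_Ioi] at hx
    rw [abs_neg, abs_of_pos hx, neg_pow, show ((-1:ℝ)^2) = 1 by norm_num, one_mul,
      show (-x)*a/σ = -(x*a/σ) by ring, besselI0_neg]
  rw [setIntegral_congr_fun measurableSet_Ioi hcong]
  exact bessel_norm σ a hσ ha

open Real Set in
private lemma gauss2 (σ c₁ c₂ : ℝ) (hσ : 0 < σ) :
    ∫ y : Fin 2 → ℝ, Real.exp (-((y 0 - c₁)^2 + (y 1 - c₂)^2)/(2*σ))
      = 2*Real.pi*σ := by
  rw [← MeasurePreserving.integral_comp'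
    ((volume_preserving_finTwoArrow ℝ).symm)
    (fun y : Fin 2 → ℝ => Real.exp (-((y 0 - c₁)^2 + (y 1 - c₂)^2)/(2*σ)))]
  have h1 : ∀ p : ℝ × ℝ,
      Real.exp (-(((MeasurableEquiv.finTwoArrow.symm p : Fin 2 → ℝ) 0 - c₁)^2
        + ((MeasurableEquiv.finTwoArrow.symm p : Fin 2 → ℝ) 1 - c₂)^2)/(2*σ))
      = Real.exp (-(p.1 - c₁)^2/(2*σ)) * Real.exp (-(p.2 - c₂)^2/(2*σ)) := by
    intro p
    have e0 : ((MeasurableEquiv.finTwoArrow.symm p : Fin 2 → ℝ) 0) = p.1 := rfl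
    have e1 : ((MeasurableEquiv.finTwoArrow.symm p : Fin 2 → ℝ) 1) = p.2 := rfl
    rw [e0, e1, ← Real.exp_add]; congr 1; ring
  simp_rw [h1]
  rw [Measure.volume_eq_prod,
    MeasureTheory.integral_prod_mul (fun x : ℝ => Real.exp (-(x - c₁)^2/(2*σ)))
      (fun y : ℝ => Real.exp (-(y - c₂)^2/(2*σ))), gauss1 σ c₁ hσ, gauss1 σ c₂ hσ]
  exact Real.mul_self_sqrt (by positivity)

open Real Set in
private lemma norm_aux (b : OrthonormalBasis (Fin 3) ℝ (EuclideanSpace ℝ (Fin 3)))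
    (u : EuclideanSpace ℝ (Fin 3)) (rpar : ℝ) (x : EuclideanSpace ℝ (Fin 3)) :
    ‖(b.repr.symm x - (x 0) • (b 0)) - (1 - rpar) • (u - (b.repr u 0) • (b 0))‖ ^ 2
      = (x 1 - (1-rpar) * b.repr u 1)^2 + (x 2 - (1-rpar) * b.repr u 2)^2 := by
  set v := b.repr.symm x with hv
  set w := (v - (x 0) • (b 0)) - (1 - rpar) • (u - (b.repr u 0) • (b 0)) with hw
  have hnorm : ‖w‖ = ‖b.repr w‖ := (b.repr.norm_map w).symm
  have hrw : b.repr w = x - (x 0) • (EuclideanSpace.single 0 1)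
      - (1 - rpar) • (b.repr u - (b.repr u 0) • (EuclideanSpace.single 0 1)) := by
    simp only [hw, map_sub, LinearIsometryEquiv.map_smul, b.repr_self, hv,
      b.repr.apply_symm_apply]
  have hcoord : ∀ i : Fin 3, (b.repr w) i
      = x i - (x 0) * (if i = 0 then 1 else 0)
        - (1 - rpar) * (b.repr u i - (b.repr u 0) * (if i = 0 then 1 else 0)) := by
    intro i
    rw [hrw]
    simp [EuclideanSpace.single_apply]
  have h0 : (b.repr w) 0 = 0 := by rw [hcoord]; simp
  have h1 : (b.repr w) 1 = x 1 - (1-rpar) * b.repr u 1 := by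
    rw [hcoord]; norm_num [Fin.ext_iff]
  have h2 : (b.repr w) 2 = x 2 - (1-rpar) * b.repr u 2 := by
    rw [hcoord]; norm_num [Fin.ext_iff]
  rw [hnorm, EuclideanSpace.norm_eq, Real.sq_sqrt (by positivity),
    Fin.sum_univ_three, h0, h1, h2]
  simp [Real.norm_eq_abs, sq_abs]

/-- The Cercignani–Lampis scattering kernel `R(u → v)` with unit normal `n`,
wall temperature `T` and accommodation coefficients `rperp`, `rpar`. -/
noncomputable def clKernel (n : EuclideanSpace ℝ (Fin 3)) (T rperp rpar : ℝ)
    (u v : EuclideanSpace ℝ (Fin 3)) : ℝ :=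
  (2 / (Real.pi * rperp * rpar * (2 - rpar))) * (|(inner ℝ n v : ℝ)| / (2 * T) ^ 2) *
    Real.exp (-(1 / (2 * T)) *
      (((inner ℝ v n : ℝ) ^ 2 + (1 - rperp) * (inner ℝ u n : ℝ) ^ 2) / rperp +
        ‖(v - (inner ℝ v n : ℝ) • n) - (1 - rpar) • (u - (inner ℝ u n : ℝ) • n)‖ ^ 2 /
          (rpar * (2 - rpar)))) *
    besselI0 (Real.sqrt (1 - rperp) * (inner ℝ v n : ℝ) * (inner ℝ u n : ℝ) / (T * rperp))

/-- The Cercignani–Lampis kernel is a probability density on incoming velocities: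
for every `u` with `u ⬝ n > 0`, `∫_{v ⬝ n < 0} R(u → v) dv = 1`. -/
theorem clKernel_integral_eq_one
    (n : EuclideanSpace ℝ (Fin 3)) (hn : ‖n‖ = 1)
    (T : ℝ) (hT : 0 < T)
    (rperp rpar : ℝ) (hrperp0 : 0 < rperp) (hrperp1 : rperp ≤ 1)
    (hrpar0 : 0 < rpar) (hrpar2 : rpar < 2)
    (u : EuclideanSpace ℝ (Fin 3)) (hu : 0 < (inner ℝ u n : ℝ)) :
    ∫ v in {v : EuclideanSpace ℝ (Fin 3) | (inner ℝ v n : ℝ) < 0},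
      clKernel n T rperp rpar u v = 1 := by
  classical
  have hπ := Real.pi_pos
  have hrpar2' : 0 < 2 - rpar := by linarith
  have h1perp : 0 ≤ 1 - rperp := by linarith
  -- orthonormal basis with `b 0 = n`
  have hno : Orthonormal ℝ (({0} : Set (Fin 3)).restrict (fun _ : Fin 3 => n)) := by
    constructor
    · intro i; exact hn
    · intro i j hij
      exact absurd (Subsingleton.elim i j) hij
  obtain ⟨b, hb⟩ := hno.exists_orthonormalBasis_extension_of_card_eq (by simp)
  have hb0 : b 0 = n := hb 0 rfl
  -- abbreviations
  set iu : ℝ := b.repr u 0 with hiu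
  have hun : (inner ℝ u n : ℝ) = iu := by
    rw [real_inner_comm, ← hb0, ← b.repr_apply_apply, hiu]
  have hiu0 : 0 < iu := by rw [← hun]; exact hu
  set a : ℝ := Real.sqrt (1 - rperp) * iu with ha
  have ha0 : 0 ≤ a := by positivity
  set σp : ℝ := T * rperp with hσp
  have hσp0 : 0 < σp := by positivity
  set σl : ℝ := T * (rpar * (2 - rpar)) with hσl
  have hσl0 : 0 < σl := by positivity
  set c1 : ℝ := (1 - rpar) * b.repr u 1 with hc1
  set c2 : ℝ := (1 - rpar) * b.repr u 2 with hc2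
  set Kc : ℝ := 2 / (Real.pi * rperp * rpar * (2 - rpar)) / (2*T)^2 with hKc
  -- claim: kernel in coordinates
  have hclaim : ∀ x : EuclideanSpace ℝ (Fin 3),
      clKernel n T rperp rpar u (b.repr.symm x)
        = (Kc * (|x 0| * Real.exp (-((x 0)^2 + a^2)/(2*σp)) * besselI0 ((x 0)*a/σp)))
          * Real.exp (-((x 1 - c1)^2 + (x 2 - c2)^2)/(2*σl)) := by
    intro x
    have hxx : (inner ℝ (b.repr.symm x) n : ℝ) = x 0 := by
      rw [real_inner_comm, ← hb0, ← b.repr_apply_apply, b.repr.apply_symm_apply]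
    have hnx : (inner ℝ n (b.repr.symm x) : ℝ) = x 0 := by
      rw [← real_inner_comm]; exact hxx
    unfold clKernel
    rw [hxx, hnx, hun, ← hb0, norm_aux b u rpar x]
    have ha2 : a^2 = (1 - rperp) * iu^2 := by
      rw [ha, mul_pow, Real.sq_sqrt h1perp]
    have hexp : -(1 / (2 * T)) *
        (((x 0) ^ 2 + (1 - rperp) * iu ^ 2) / rperp +
          ((x 1 - c1)^2 + (x 2 - c2)^2) / (rpar * (2 - rpar)))
        = -((x 0)^2 + a^2)/(2*σp) + -((x 1 - c1)^2 + (x 2 - c2)^2)/(2*σl) := by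
      rw [ha2, hσp, hσl]
      field_simp
      ring
    rw [hexp, Real.exp_add]
    have harg : Real.sqrt (1 - rperp) * (x 0) * iu / (T * rperp) = (x 0) * a / σp := by
      rw [ha, hσp]; ring
    rw [harg, hKc]
    ring
  -- change of variables to coordinates
  have hemb1 : MeasurableEmbedding (⇑b.repr.symm) :=
    b.repr.symm.toHomeomorph.measurableEmbedding
  have hpre1 : (⇑b.repr.symm) ⁻¹' {v : EuclideanSpace ℝ (Fin 3) | (inner ℝ v n : ℝ) < 0}
      = {x : EuclideanSpace ℝ (Fin 3) | x 0 < 0} := by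
    ext x
    simp only [Set.mem_preimage, Set.mem_setOf_eq]
    rw [real_inner_comm, ← hb0, ← b.repr_apply_apply, b.repr.apply_symm_apply]
  have step1 : ∫ v in {v : EuclideanSpace ℝ (Fin 3) | (inner ℝ v n : ℝ) < 0},
        clKernel n T rperp rpar u v
      = ∫ x in {x : EuclideanSpace ℝ (Fin 3) | x 0 < 0},
          (Kc * (|x 0| * Real.exp (-((x 0)^2 + a^2)/(2*σp)) * besselI0 ((x 0)*a/σp)))
            * Real.exp (-((x 1 - c1)^2 + (x 2 - c2)^2)/(2*σl)) := by
    rw [← (b.measurePreserving_repr_symm).setIntegral_preimage_emb hemb1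
      (fun v => clKernel n T rperp rpar u v)
      {v : EuclideanSpace ℝ (Fin 3) | (inner ℝ v n : ℝ) < 0}, hpre1]
    exact setIntegral_congr_fun
      (measurableSet_lt (((measurable_pi_apply 0).comp
        (MeasurableEquiv.toLp 2 (Fin 3 → ℝ)).symm.measurable)) measurable_const)
      (fun x _ => hclaim x)
  rw [step1]
  -- to `Fin 3 → ℝ`
  have hmp2 := (EuclideanSpace.volume_preserving_symm_measurableEquiv_toLp (Fin 3)).symm
  have step2 : ∫ x in {x : EuclideanSpace ℝ (Fin 3) | x 0 < 0},
          (Kc * (|x 0| * Real.exp (-((x 0)^2 + a^2)/(2*σp)) * besselI0 ((x 0)*a/σp)))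
            * Real.exp (-((x 1 - c1)^2 + (x 2 - c2)^2)/(2*σl))
      = ∫ y in {y : Fin 3 → ℝ | y 0 < 0},
          (Kc * (|y 0| * Real.exp (-((y 0)^2 + a^2)/(2*σp)) * besselI0 ((y 0)*a/σp)))
            * Real.exp (-((y 1 - c1)^2 + (y 2 - c2)^2)/(2*σl)) := by
    rw [← hmp2.setIntegral_preimage_emb
      (MeasurableEquiv.toLp 2 (Fin 3 → ℝ)).symm.symm.measurableEmbedding
      (fun x : EuclideanSpace ℝ (Fin 3) =>
        (Kc * (|x 0| * Real.exp (-((x 0)^2 + a^2)/(2*σp)) * besselI0 ((x 0)*a/σp)))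
          * Real.exp (-((x 1 - c1)^2 + (x 2 - c2)^2)/(2*σl)))
      {x : EuclideanSpace ℝ (Fin 3) | x 0 < 0}]
    rfl
  rw [step2]
  -- split first coordinate
  have hmp3 := (volume_preserving_piFinSuccAbove (fun _ : Fin 3 => ℝ) 0).symm
  have step3 : ∫ y in {y : Fin 3 → ℝ | y 0 < 0},
          (Kc * (|y 0| * Real.exp (-((y 0)^2 + a^2)/(2*σp)) * besselI0 ((y 0)*a/σp)))
            * Real.exp (-((y 1 - c1)^2 + (y 2 - c2)^2)/(2*σl))
      = ∫ p in (Set.Iio (0:ℝ)) ×ˢ (Set.univ : Set (Fin 2 → ℝ)),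
          (Kc * (|p.1| * Real.exp (-(p.1^2 + a^2)/(2*σp)) * besselI0 (p.1*a/σp)))
            * Real.exp (-((p.2 0 - c1)^2 + (p.2 1 - c2)^2)/(2*σl)) := by
    rw [← hmp3.setIntegral_preimage_emb
      (MeasurableEquiv.piFinSuccAbove (fun _ : Fin 3 => ℝ) 0).symm.measurableEmbedding
      (fun y : Fin 3 → ℝ =>
        (Kc * (|y 0| * Real.exp (-((y 0)^2 + a^2)/(2*σp)) * besselI0 ((y 0)*a/σp)))
          * Real.exp (-((y 1 - c1)^2 + (y 2 - c2)^2)/(2*σl)))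
      {y : Fin 3 → ℝ | y 0 < 0}]
    have hpre : (⇑(MeasurableEquiv.piFinSuccAbove (fun _ : Fin 3 => ℝ) 0).symm) ⁻¹'
        {y : Fin 3 → ℝ | y 0 < 0} = (Set.Iio (0:ℝ)) ×ˢ (Set.univ : Set (Fin 2 → ℝ)) := by
      ext p
      simp only [Set.mem_preimage, Set.mem_setOf_eq, Set.mem_prod, Set.mem_Iio,
        Set.mem_univ, and_true]
      rfl
    rw [hpre]
    rfl
  rw [step3]
  -- factorize
  have step4 : ∫ p in (Set.Iio (0:ℝ)) ×ˢ (Set.univ : Set (Fin 2 → ℝ)),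
          (Kc * (|p.1| * Real.exp (-(p.1^2 + a^2)/(2*σp)) * besselI0 (p.1*a/σp)))
            * Real.exp (-((p.2 0 - c1)^2 + (p.2 1 - c2)^2)/(2*σl))
      = (∫ t in Set.Iio (0:ℝ),
            Kc * (|t| * Real.exp (-(t^2 + a^2)/(2*σp)) * besselI0 (t*a/σp)))
          * ∫ y : Fin 2 → ℝ, Real.exp (-((y 0 - c1)^2 + (y 1 - c2)^2)/(2*σl)) := by
    rw [Measure.volume_eq_prod, ← Measure.prod_restrict, Measure.restrict_univ]
    exact MeasureTheory.integral_prod_mul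
      (fun t : ℝ => Kc * (|t| * Real.exp (-(t^2 + a^2)/(2*σp)) * besselI0 (t*a/σp)))
      (fun y : Fin 2 → ℝ => Real.exp (-((y 0 - c1)^2 + (y 1 - c2)^2)/(2*σl)))
  rw [step4, MeasureTheory.integral_const_mul,
    bessel_norm_neg σp a hσp0 ha0, gauss2 σl c1 c2 hσl0]
  -- final arithmetic
  rw [hKc, hσp, hσl]
  have hπ' : Real.pi ≠ 0 := ne_of_gt hπ
  have hT' : T ≠ 0 := ne_of_gt hT
  have h1 : rperp ≠ 0 := ne_of_gt hrperp0
  have h2 : rpar ≠ 0 := ne_of_gt hrpar0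
  have h3 : (2 - rpar) ≠ 0 := ne_of_gt hrpar2'
  field_simp
end

section
/- The Cercignani–Lampis kernel satisfies the reciprocity identity: for all u, v ∈ ℝ³ with u·n > 0 and v·n < 0, R(u→v) = R(−v→−u) · exp( −(|v|² − |u|²)/(2T) ) · (|n·v| / |n·u|). (Here −v satisfies (−v)·n > 0 and −u satisfies (−u)·n < 0, so R(−v→−u) is defined by the same formula.) -/
open MeasureTheory

private lemma aux_norm_perp (n w : EuclideanSpace ℝ (Fin 3)) (hn : ‖n‖ = 1) :
    ‖w - (inner ℝ w n : ℝ) • n‖ ^ 2 = ‖w‖ ^ 2 - (inner ℝ w n : ℝ) ^ 2 := by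
  rw [@norm_sub_sq_real]
  simp only [real_inner_smul_right, norm_smul, Real.norm_eq_abs, hn, mul_one]
  rw [sq_abs]; ring

private lemma aux_swap (x y : EuclideanSpace ℝ (Fin 3)) (r : ℝ) :
    ‖x - r • y‖ ^ 2 - ‖y - r • x‖ ^ 2 = (1 - r ^ 2) * (‖x‖ ^ 2 - ‖y‖ ^ 2) := by
  rw [@norm_sub_sq_real, @norm_sub_sq_real]
  simp only [real_inner_smul_right, norm_smul, Real.norm_eq_abs]
  rw [real_inner_comm y x, mul_pow, sq_abs, mul_pow, sq_abs]
  ring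

/-- Reciprocity of the Cercignani–Lampis kernel:
`R(u→v) = R(−v→−u) · exp(−(|v|²−|u|²)/(2T)) · |n·v|/|n·u|`
for all `u` with `u ⬝ n > 0` and `v` with `v ⬝ n < 0`. -/
theorem clKernel_reciprocity
    (n : EuclideanSpace ℝ (Fin 3)) (hn : ‖n‖ = 1)
    (T : ℝ) (hT : 0 < T)
    (rperp rpar : ℝ) (hrperp0 : 0 < rperp) (hrperp1 : rperp ≤ 1)
    (hrpar0 : 0 < rpar) (hrpar2 : rpar < 2)
    (u v : EuclideanSpace ℝ (Fin 3))
    (hu : 0 < (inner ℝ u n : ℝ)) (hv : (inner ℝ v n : ℝ) < 0) :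
    clKernel n T rperp rpar u v =
      clKernel n T rperp rpar (-v) (-u) *
        Real.exp (-(‖v‖ ^ 2 - ‖u‖ ^ 2) / (2 * T)) *
        (|(inner ℝ n v : ℝ)| / |(inner ℝ n u : ℝ)|) := by

  have h1 : rperp ≠ 0 := hrperp0.ne'
  have h2 : rpar ≠ 0 := hrpar0.ne'
  have h3 : (2 - rpar) ≠ 0 := by linarith
  have hT' : (2 * T) ≠ 0 := by positivity
  obtain ⟨a, ha'⟩ : ∃ a : ℝ, (inner ℝ u n : ℝ) = a := ⟨_, rfl⟩
  obtain ⟨b, hb'⟩ : ∃ b : ℝ, (inner ℝ v n : ℝ) = b := ⟨_, rfl⟩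
  obtain ⟨p, hp'⟩ : ∃ p : EuclideanSpace ℝ (Fin 3), u - a • n = p := ⟨_, rfl⟩
  obtain ⟨q, hq'⟩ : ∃ q : EuclideanSpace ℝ (Fin 3), v - b • n = q := ⟨_, rfl⟩
  have hp2 : ‖p‖ ^ 2 = ‖u‖ ^ 2 - a ^ 2 := by
    rw [← hp', ← ha']; exact aux_norm_perp n u hn
  have hq2 : ‖q‖ ^ 2 = ‖v‖ ^ 2 - b ^ 2 := by
    rw [← hq', ← hb']; exact aux_norm_perp n v hn
  have key := aux_swap q p (1 - rpar)
  have hE : (b ^ 2 + (1 - rperp) * a ^ 2) / rperp +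
        ‖q - (1 - rpar) • p‖ ^ 2 / (rpar * (2 - rpar)) =
      ((a ^ 2 + (1 - rperp) * b ^ 2) / rperp +
        ‖p - (1 - rpar) • q‖ ^ 2 / (rpar * (2 - rpar))) + (‖v‖ ^ 2 - ‖u‖ ^ 2) := by
    have hA : ‖q - (1 - rpar) • p‖ ^ 2 = ‖p - (1 - rpar) • q‖ ^ 2 +
        (rpar * (2 - rpar)) * ((‖v‖ ^ 2 - b ^ 2) - (‖u‖ ^ 2 - a ^ 2)) := by
      linear_combination key + (1 - (1 - rpar) ^ 2) * hq2 - (1 - (1 - rpar) ^ 2) * hp2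
    rw [hA]
    field_simp
    ring
  have hexpeq : Real.exp (-(1 / (2 * T)) *
      ((b ^ 2 + (1 - rperp) * a ^ 2) / rperp +
        ‖q - (1 - rpar) • p‖ ^ 2 / (rpar * (2 - rpar)))) =
    Real.exp (-(1 / (2 * T)) *
      ((a ^ 2 + (1 - rperp) * b ^ 2) / rperp +
        ‖p - (1 - rpar) • q‖ ^ 2 / (rpar * (2 - rpar)))) *
      Real.exp (-(‖v‖ ^ 2 - ‖u‖ ^ 2) / (2 * T)) := by
    rw [← Real.exp_add, hE]
    congr 1
    field_simp
    ring
  have hane : a ≠ 0 := by rw [← ha']; exact ne_of_gt hu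
  have hcomm1 : (inner ℝ n v : ℝ) = b := by rw [← hb', real_inner_comm]
  have hcomm2 : (inner ℝ n u : ℝ) = a := by rw [← ha', real_inner_comm]
  simp only [clKernel, inner_neg_left, inner_neg_right, ha', hb', hcomm1, hcomm2]
  rw [hp', hq']
  have hpar1 : (-v : EuclideanSpace ℝ (Fin 3)) - (-b) • n = -q := by
    rw [← hq']; module
  have hpar2 : (-u : EuclideanSpace ℝ (Fin 3)) - (-a) • n = -p := by
    rw [← hp']; module
  rw [hpar1, hpar2]
  rw [show ‖(-p : EuclideanSpace ℝ (Fin 3)) - (1 - rpar) • (-q)‖ = ‖p - (1 - rpar) • q‖ by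
    rw [show (-p : EuclideanSpace ℝ (Fin 3)) - (1 - rpar) • (-q) = -(p - (1 - rpar) • q) by module,
      norm_neg]]
  rw [show Real.sqrt (1 - rperp) * -a * -b / (T * rperp) =
      Real.sqrt (1 - rperp) * b * a / (T * rperp) by ring]
  rw [show ((-a : ℝ) ^ 2 + (1 - rperp) * (-b) ^ 2) = (a ^ 2 + (1 - rperp) * b ^ 2) by ring]
  rw [abs_neg, hexpeq]
  have habs : |a| ≠ 0 := abs_ne_zero.mpr hane
  field_simp
end

section
/- Let a, b, ε > 0 with a + ε < b. Then for every w ∈ ℝ² and every δ > 0: (b/π) ∫_{{v ∈ ℝ² : |v − (b/(b−a−ε))w| > 1/δ}} e^{ε|v|²} e^{a|v|²} e^{−b|v−w|²} dv ≤ e^{−(b−a−ε)/δ²} · (b/(b−a−ε)) · exp( ((a+ε)b/(b−a−ε)) |w|² ). -/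
open MeasureTheory

private lemma oneD_tail (c R : ℝ) (hc : 0 < c) :
    ∫ y in Set.Ioi R, y * Real.exp (-c * y ^ 2) = Real.exp (-c * R ^ 2) / (2 * c) := by
  have hderiv : ∀ x ∈ Set.Ici R,
      HasDerivAt (fun y => -Real.exp (-c * y ^ 2) / (2 * c)) (x * Real.exp (-c * x ^ 2)) x := by
    intro x _
    have h1 : HasDerivAt (fun y : ℝ => -c * y ^ 2) (-c * (2 * x)) x := by
      simpa using (hasDerivAt_pow 2 x).const_mul (-c)
    have h2 := (h1.exp.neg).div_const (2 * c)
    convert h2 using 1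
    · rfl
    · rfl
    · rfl
    rw [eq_div_iff (by positivity)]
    ring
  have hint : IntegrableOn (fun y : ℝ => y * Real.exp (-c * y ^ 2)) (Set.Ioi R) :=
    (integrable_mul_exp_neg_mul_sq hc).integrableOn
  have htend : Filter.Tendsto (fun y : ℝ => -Real.exp (-c * y ^ 2) / (2 * c))
      Filter.atTop (nhds 0) := by
    have h0 : Filter.Tendsto (fun y : ℝ => -c * y ^ 2) Filter.atTop Filter.atBot := by
      apply Filter.Tendsto.const_mul_atTop_of_neg (by linarith : (-c) < 0)
      exact Filter.tendsto_pow_atTop (by norm_num)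
    have h1 := (Real.tendsto_exp_atBot.comp h0).neg.div_const (2 * c)
    simpa using h1
  have := integral_Ioi_of_hasDerivAt_of_tendsto' hderiv hint htend
  rw [this]
  field_simp
  ring

private lemma tail2D (c R : ℝ) (hc : 0 < c) (hR : 0 < R) :
    ∫ u in {u : EuclideanSpace ℝ (Fin 2) | R < ‖u‖}, Real.exp (-c * ‖u‖ ^ 2)
      = Real.pi / c * Real.exp (-c * R ^ 2) := by
  classical
  set f : ℝ → ℝ := Set.indicator (Set.Ioi R) (fun r => Real.exp (-c * r ^ 2)) with hf
  have hS : MeasurableSet {u : EuclideanSpace ℝ (Fin 2) | R < ‖u‖} :=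
    (isOpen_lt continuous_const continuous_norm).measurableSet
  have h1 : ∫ u in {u : EuclideanSpace ℝ (Fin 2) | R < ‖u‖}, Real.exp (-c * ‖u‖ ^ 2)
      = ∫ u : EuclideanSpace ℝ (Fin 2), f ‖u‖ := by
    rw [← integral_indicator hS]
    refine integral_congr_ae (Filter.Eventually.of_forall fun u => ?_)
    simp [hf, Set.indicator_apply, Set.mem_setOf_eq, Set.mem_Ioi]
  rw [h1, MeasureTheory.integral_fun_norm_addHaar volume f]
  have hdim : Module.finrank ℝ (EuclideanSpace ℝ (Fin 2)) = 2 := by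
    simp [finrank_euclideanSpace]
  rw [hdim]
  have hball : (volume (Metric.ball (0 : EuclideanSpace ℝ (Fin 2)) 1)).toReal = Real.pi := by
    rw [EuclideanSpace.volume_ball]
    norm_num [Real.Gamma_two, Real.sq_sqrt Real.pi_pos.le,
      ENNReal.toReal_ofReal Real.pi_pos.le]
  rw [measureReal_def, hball]
  have h2 : ∫ y in Set.Ioi (0 : ℝ), y ^ (2 - 1) • f y
      = ∫ y in Set.Ioi R, y * Real.exp (-c * y ^ 2) := by
    have : ∀ y : ℝ, y ^ (2 - 1) • f y
        = Set.indicator (Set.Ioi R) (fun y => y * Real.exp (-c * y ^ 2)) y := by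
      intro y
      by_cases hy : y ∈ Set.Ioi R <;> simp [hf, Set.indicator_apply, hy]
    simp_rw [this]
    rw [integral_indicator measurableSet_Ioi, Measure.restrict_restrict measurableSet_Ioi,
      Set.Ioi_inter_Ioi, max_eq_left hR.le]
  rw [h2, oneD_tail c R hc]
  simp only [smul_eq_mul, nsmul_eq_mul]
  field_simp
  ring

/-- Gaussian tail estimate on `ℝ²`: for `a, b, ε > 0` with `a + ε < b`, any `w ∈ ℝ²`
and any `δ > 0`,
`(b/π) ∫_{|v − (b/(b−a−ε))w| > 1/δ} e^{ε|v|²} e^{a|v|²} e^{−b|v−w|²} dv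
  ≤ e^{−(b−a−ε)/δ²} · (b/(b−a−ε)) · exp(((a+ε)b/(b−a−ε)) |w|²)`. -/
theorem gaussian_integral_plane_tail (a b ε : ℝ) (ha : 0 < a) (hb : 0 < b) (hε : 0 < ε)
    (hab : a + ε < b) (w : EuclideanSpace ℝ (Fin 2)) (δ : ℝ) (hδ : 0 < δ) :
    (b / Real.pi) * ∫ v in {v : EuclideanSpace ℝ (Fin 2) |
        1 / δ < ‖v - (b / (b - a - ε)) • w‖},
        Real.exp (ε * ‖v‖ ^ 2) * Real.exp (a * ‖v‖ ^ 2) * Real.exp (-b * ‖v - w‖ ^ 2)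
      ≤ Real.exp (-(b - a - ε) / δ ^ 2) *
          ((b / (b - a - ε)) * Real.exp ((a + ε) * b / (b - a - ε) * ‖w‖ ^ 2)) := by
  have hc : 0 < b - a - ε := by linarith
  set c := b - a - ε with hcdef
  set μ := (b / c) • w with hμ
  set K := (a + ε) * b / c * ‖w‖ ^ 2 with hK
  set S' := {v : EuclideanSpace ℝ (Fin 2) | 1 / δ < ‖v - μ‖} with hS'def
  have hS' : MeasurableSet S' :=
    (isOpen_lt continuous_const (continuous_norm.comp (continuous_id.sub continuous_const))).measurableSet
  have hS : MeasurableSet {u : EuclideanSpace ℝ (Fin 2) | 1 / δ < ‖u‖} :=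
    (isOpen_lt continuous_const continuous_norm).measurableSet
  -- pointwise identity
  have hpt : ∀ v : EuclideanSpace ℝ (Fin 2),
      Real.exp (ε * ‖v‖ ^ 2) * Real.exp (a * ‖v‖ ^ 2) * Real.exp (-b * ‖v - w‖ ^ 2)
        = Real.exp K * Real.exp (-c * ‖v - μ‖ ^ 2) := by
    intro v
    rw [← Real.exp_add, ← Real.exp_add, ← Real.exp_add]
    congr 1
    have h1 : ‖v - w‖ ^ 2 = ‖v‖ ^ 2 - 2 * inner ℝ v w + ‖w‖ ^ 2 := norm_sub_sq_real v w
    have h2 : ‖v - μ‖ ^ 2 = ‖v‖ ^ 2 - 2 * inner ℝ v μ + ‖μ‖ ^ 2 := norm_sub_sq_real v μ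
    have h3 : (inner ℝ v μ : ℝ) = (b / c) * inner ℝ v w := real_inner_smul_right v w (b / c)
    have h4 : ‖μ‖ ^ 2 = (b / c) ^ 2 * ‖w‖ ^ 2 := by
      rw [hμ, norm_smul, Real.norm_eq_abs, mul_pow, sq_abs]
    set t : ℝ := inner ℝ v w with ht
    rw [h1, h2, h3, h4, hK]
    have hc' : c ≠ 0 := ne_of_gt hc
    have hbc : b = c + a + ε := by rw [hcdef]; ring
    rw [hbc]
    field_simp
    ring
  -- translation
  have htrans : ∫ v in S', Real.exp (-c * ‖v - μ‖ ^ 2)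
      = ∫ u in {u : EuclideanSpace ℝ (Fin 2) | 1 / δ < ‖u‖}, Real.exp (-c * ‖u‖ ^ 2) := by
    set g : EuclideanSpace ℝ (Fin 2) → ℝ :=
      Set.indicator {u : EuclideanSpace ℝ (Fin 2) | 1 / δ < ‖u‖}
        (fun u => Real.exp (-c * ‖u‖ ^ 2)) with hg
    calc ∫ v in S', Real.exp (-c * ‖v - μ‖ ^ 2)
        = ∫ v : EuclideanSpace ℝ (Fin 2), g (v - μ) := by
          rw [← integral_indicator hS']
          refine integral_congr_ae (Filter.Eventually.of_forall fun v => ?_)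
          simp [hg, Set.indicator_apply, hS'def, Set.mem_setOf_eq]
      _ = ∫ u : EuclideanSpace ℝ (Fin 2), g u := integral_sub_right_eq_self g μ
      _ = _ := integral_indicator hS
  have hint : ∫ v in S',
      Real.exp (ε * ‖v‖ ^ 2) * Real.exp (a * ‖v‖ ^ 2) * Real.exp (-b * ‖v - w‖ ^ 2)
      = Real.exp K * (Real.pi / c * Real.exp (-c * (1 / δ) ^ 2)) := by
    calc ∫ v in S',
        Real.exp (ε * ‖v‖ ^ 2) * Real.exp (a * ‖v‖ ^ 2) * Real.exp (-b * ‖v - w‖ ^ 2)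
        = ∫ v in S', Real.exp K * Real.exp (-c * ‖v - μ‖ ^ 2) := by
          exact setIntegral_congr_fun hS' fun v _ => hpt v
      _ = Real.exp K * ∫ v in S', Real.exp (-c * ‖v - μ‖ ^ 2) := integral_const_mul _ _
      _ = Real.exp K * (Real.pi / c * Real.exp (-c * (1 / δ) ^ 2)) := by
          rw [htrans, tail2D c (1 / δ) hc (by positivity)]
  rw [hint]
  apply le_of_eq
  have hexp : Real.exp (-c * (1 / δ) ^ 2) = Real.exp (-c / δ ^ 2) := by
    rw [div_pow, one_pow, mul_one_div, neg_div]
  rw [hexp]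
  have hπ : Real.pi ≠ 0 := Real.pi_ne_zero
  have hc' : c ≠ 0 := ne_of_gt hc
  field_simp
end

section
/- Let a, b, ε > 0 with a + ε < b. Then there exists δ₀ > 0 such that for every δ ∈ (0, δ₀] and every w ≥ 0: 2b ∫₀^δ v e^{ε v²} e^{a v²} e^{−b v²} e^{−b w²} I₀(2 b v w) dv ≤ δ · (b/(b−a−ε)) · exp( ((a+ε)b/(b−a−ε)) w² ). -/
open MeasureTheory

lemma besselI0_le_exp (y : ℝ) (hy : 0 ≤ y) : besselI0 y ≤ Real.exp y := by
  have hπ := Real.pi_pos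
  have h1 : ∫ φ in (0:ℝ)..Real.pi, Real.exp (y * Real.cos φ)
      ≤ ∫ _ in (0:ℝ)..Real.pi, Real.exp y := by
    apply intervalIntegral.integral_mono_on hπ.le
    · exact (Real.continuous_exp.comp (continuous_const.mul Real.continuous_cos)).intervalIntegrable _ _
    · exact intervalIntegrable_const
    · intro x _
      exact Real.exp_le_exp.2 (by nlinarith [Real.cos_le_one x])
  have h2 : ∫ _ in (0:ℝ)..Real.pi, Real.exp y = Real.pi * Real.exp y := by
    simp [intervalIntegral.integral_const, smul_eq_mul]
  unfold besselI0
  calc (1 / Real.pi) * ∫ φ in (0:ℝ)..Real.pi, Real.exp (y * Real.cos φ)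
      ≤ (1 / Real.pi) * (Real.pi * Real.exp y) := by
        rw [← h2]; exact mul_le_mul_of_nonneg_left h1 (by positivity)
    _ = Real.exp y := by field_simp

/-- Smallness of the Gaussian–Bessel integral near the origin: for `a, b, ε > 0` with
`a + ε < b` there exists `δ₀ > 0` such that for all `0 < δ ≤ δ₀` and all `w ≥ 0`,
`2b ∫₀^δ v e^{εv²} e^{av²} e^{−bv²} e^{−bw²} I₀(2bvw) dv
  ≤ δ · (b/(b−a−ε)) · exp(((a+ε)b/(b−a−ε)) w²)`. -/
theorem gaussian_bessel_integral_small (a b ε : ℝ) (ha : 0 < a) (hb : 0 < b) (hε : 0 < ε)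
    (hab : a + ε < b) :
    ∃ δ₀ > 0, ∀ δ : ℝ, 0 < δ → δ ≤ δ₀ → ∀ w : ℝ, 0 ≤ w →
      2 * b * ∫ v in Set.Ioo (0:ℝ) δ,
          v * Real.exp (ε * v ^ 2) * Real.exp (a * v ^ 2) * Real.exp (-b * v ^ 2) *
            Real.exp (-b * w ^ 2) * besselI0 (2 * b * v * w)
        ≤ δ * ((b / (b - a - ε)) * Real.exp ((a + ε) * b / (b - a - ε) * w ^ 2)) := by
  have hd : 0 < b - a - ε := by linarith
  refine ⟨1 / (b - a - ε), by positivity, ?_⟩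
  intro δ hδ hδ₀ w hw
  set E := Real.exp ((a + ε) * b / (b - a - ε) * w ^ 2) with hE
  have hEpos : 0 < E := Real.exp_pos _
  set f : ℝ → ℝ := fun v =>
    v * Real.exp (ε * v ^ 2) * Real.exp (a * v ^ 2) * Real.exp (-b * v ^ 2) *
      Real.exp (-b * w ^ 2) * besselI0 (2 * b * v * w) with hf
  -- pointwise bound
  have hpt : ∀ v ∈ Set.Ioo (0:ℝ) δ, f v ≤ v * E := by
    intro v hv
    obtain ⟨hv0, hvδ⟩ := hv
    have hy : 0 ≤ 2 * b * v * w := by positivity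
    have hI : besselI0 (2 * b * v * w) ≤ Real.exp (2 * b * v * w) :=
      besselI0_le_exp _ hy
    have h1 : f v ≤ v * Real.exp (ε * v ^ 2) * Real.exp (a * v ^ 2) * Real.exp (-b * v ^ 2) *
        Real.exp (-b * w ^ 2) * Real.exp (2 * b * v * w) := by
      apply mul_le_mul_of_nonneg_left hI
      positivity
    have h2 : v * Real.exp (ε * v ^ 2) * Real.exp (a * v ^ 2) * Real.exp (-b * v ^ 2) *
        Real.exp (-b * w ^ 2) * Real.exp (2 * b * v * w)
        = v * Real.exp (ε * v ^ 2 + a * v ^ 2 + (-b * v ^ 2) + (-b * w ^ 2) + 2 * b * v * w) := by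
      rw [Real.exp_add, Real.exp_add, Real.exp_add, Real.exp_add]; ring
    have h3 : ε * v ^ 2 + a * v ^ 2 + (-b * v ^ 2) + (-b * w ^ 2) + 2 * b * v * w
        ≤ (a + ε) * b / (b - a - ε) * w ^ 2 := by
      rw [div_mul_eq_mul_div, le_div_iff₀ hd]
      nlinarith [sq_nonneg ((b - a - ε) * v - b * w)]
    calc f v ≤ _ := h1
      _ = _ := h2
      _ ≤ v * E := by
          apply mul_le_mul_of_nonneg_left _ hv0.le
          exact Real.exp_le_exp.2 h3
  have hid : ∫ v in Set.Ioo (0:ℝ) δ, v = δ ^ 2 / 2 := by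
    rw [← MeasureTheory.integral_Ioc_eq_integral_Ioo,
      ← intervalIntegral.integral_of_le hδ.le, integral_id]
    ring
  have hgint : IntegrableOn (fun v => v * E) (Set.Ioo (0:ℝ) δ) volume := by
    exact ((continuous_id.mul continuous_const).integrableOn_Icc).mono_set
      Set.Ioo_subset_Icc_self
  have hgval : ∫ v in Set.Ioo (0:ℝ) δ, v * E = δ ^ 2 / 2 * E := by
    rw [integral_mul_const, hid]
  by_cases hint : IntegrableOn f (Set.Ioo (0:ℝ) δ) volume
  · have hmono : ∫ v in Set.Ioo (0:ℝ) δ, f v ≤ ∫ v in Set.Ioo (0:ℝ) δ, v * E :=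
      setIntegral_mono_on hint hgint measurableSet_Ioo hpt
    have : 2 * b * ∫ v in Set.Ioo (0:ℝ) δ, f v ≤ 2 * b * (δ ^ 2 / 2 * E) := by
      rw [← hgval]
      exact mul_le_mul_of_nonneg_left hmono (by positivity)
    refine le_trans this ?_
    have hδd : δ * (b - a - ε) ≤ 1 := (le_div_iff₀ hd).mp hδ₀
    have hrhs : δ * ((b / (b - a - ε)) * E) = δ * b * E / (b - a - ε) := by
      field_simp
    rw [hrhs, le_div_iff₀ hd]
    nlinarith [mul_nonneg (mul_nonneg hb.le hδ.le) hEpos.le, hδd]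
  · rw [integral_undef hint]
    have : (0:ℝ) ≤ δ * ((b / (b - a - ε)) * E) := by positivity
    linarith
end

section
/- Let ρ > 0, θ > 0 and ρ̃ > 0 satisfy θ ≤ 2(ρ − ρ̃). Then there exists a constant C > 0 such that for every σ ∈ [0, θ] and all u, v ∈ ℝ³ with u ≠ v: k_ρ(v,u) · e^{θ|v|² − θ|u|²} · e^{σ(⟨u⟩ − ⟨v⟩)} ≤ C · k_ρ̃(v,u). -/
open MeasureTheory

/-- The kernel `k_ρ(v,u) = |v−u|⁻¹ exp(−ρ|v−u|² − ρ(|v|²−|u|²)²/|v−u|²)`. -/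
noncomputable def kker (ρ : ℝ) (v u : EuclideanSpace ℝ (Fin 3)) : ℝ :=
  ‖v - u‖⁻¹ * Real.exp (-ρ * ‖v - u‖ ^ 2 - ρ * (‖v‖ ^ 2 - ‖u‖ ^ 2) ^ 2 / ‖v - u‖ ^ 2)

/-- Weighted kernel comparison: if `ρ, θ, ρ̃ > 0` satisfy `θ ≤ 2(ρ − ρ̃)`, there is a
constant `C > 0` such that for all `σ ∈ [0, θ]` and all `u ≠ v` in `ℝ³`,
`k_ρ(v,u) e^{θ|v|²−θ|u|²} e^{σ(⟨u⟩−⟨v⟩)} ≤ C k_ρ̃(v,u)`, where `⟨v⟩ = √(1+|v|²)`. -/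
theorem kker_weighted_comparison (ρ θ ρt : ℝ) (hρ : 0 < ρ) (hθ : 0 < θ) (hρt : 0 < ρt)
    (hcond : θ ≤ 2 * (ρ - ρt)) :
    ∃ C > 0, ∀ σ ∈ Set.Icc (0:ℝ) θ, ∀ u v : EuclideanSpace ℝ (Fin 3), u ≠ v →
      kker ρ v u * Real.exp (θ * ‖v‖ ^ 2 - θ * ‖u‖ ^ 2) *
          Real.exp (σ * (Real.sqrt (1 + ‖u‖ ^ 2) - Real.sqrt (1 + ‖v‖ ^ 2)))
        ≤ C * kker ρt v u := by
  refine ⟨1, one_pos, ?_⟩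
  intro σ hσ u v huv
  obtain ⟨hσ0, hσθ⟩ := hσ
  rw [one_mul]
  unfold kker
  have hvu : v - u ≠ 0 := sub_ne_zero.mpr (Ne.symm huv)
  have ha : (0:ℝ) < ‖v - u‖ ^ 2 := pow_pos (norm_pos_iff.mpr hvu) 2
  set a : ℝ := ‖v - u‖ ^ 2 with ha_def
  set d : ℝ := ‖v‖ ^ 2 - ‖u‖ ^ 2 with hd_def
  set P : ℝ := Real.sqrt (1 + ‖u‖ ^ 2) with hP_def
  set Q : ℝ := Real.sqrt (1 + ‖v‖ ^ 2) with hQ_def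
  have hP2 : P ^ 2 = 1 + ‖u‖ ^ 2 := Real.sq_sqrt (by positivity)
  have hQ2 : Q ^ 2 = 1 + ‖v‖ ^ 2 := Real.sq_sqrt (by positivity)
  have hP1 : (1:ℝ) ≤ P := by
    rw [hP_def]
    nlinarith [Real.sq_sqrt (show (0:ℝ) ≤ 1 + ‖u‖ ^ 2 by positivity),
      Real.sqrt_nonneg (1 + ‖u‖ ^ 2), sq_nonneg ‖u‖]
  have hQ1 : (1:ℝ) ≤ Q := by
    rw [hQ_def]
    nlinarith [Real.sq_sqrt (show (0:ℝ) ≤ 1 + ‖v‖ ^ 2 by positivity),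
      Real.sqrt_nonneg (1 + ‖v‖ ^ 2), sq_nonneg ‖v‖]
  have hs : (0:ℝ) < P + Q := by linarith
  -- rewrite P - Q as -d/(P+Q)
  have hPQ : P - Q = -d / (P + Q) := by
    rw [eq_div_iff hs.ne']
    have : (P - Q) * (P + Q) = P ^ 2 - Q ^ 2 := by ring
    rw [this, hP2, hQ2, hd_def]; ring
  -- key inequality for the exponent
  have hβ : (0:ℝ) < ρ - ρt := by linarith
  set β : ℝ := ρ - ρt with hβ_def
  have hcoef0 : 0 ≤ θ - σ / (P + Q) := by
    have h1 : σ / (P + Q) ≤ σ := by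
      rw [div_le_iff₀ hs]
      nlinarith
    linarith
  have hcoefθ : θ - σ / (P + Q) ≤ θ := by
    have : 0 ≤ σ / (P + Q) := div_nonneg hσ0 hs.le
    linarith
  have hstep1 : d * (θ - σ / (P + Q)) ≤ |d| * θ := by
    calc d * (θ - σ / (P + Q)) ≤ |d| * (θ - σ / (P + Q)) :=
          mul_le_mul_of_nonneg_right (le_abs_self d) hcoef0
      _ ≤ |d| * θ := mul_le_mul_of_nonneg_left hcoefθ (abs_nonneg d)
  have hamgm : 2 * |d| ≤ a + d ^ 2 / a := by
    rw [← sub_nonneg]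
    have : a + d ^ 2 / a - 2 * |d| = (a - |d|) ^ 2 / a := by
      field_simp
      nlinarith [sq_abs d]
    rw [this]
    positivity
  have hkey : θ * d - σ * d / (P + Q) ≤ β * a + β * (d ^ 2 / a) := by
    have h1 : θ * d - σ * d / (P + Q) = d * (θ - σ / (P + Q)) := by ring
    have h2 : |d| * θ ≤ |d| * (2 * β) := by
      apply mul_le_mul_of_nonneg_left _ (abs_nonneg d)
      rw [hβ_def]; linarith
    have h3 : |d| * (2 * β) ≤ β * (a + d ^ 2 / a) := by
      calc |d| * (2 * β) = β * (2 * |d|) := by ring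
        _ ≤ β * (a + d ^ 2 / a) := mul_le_mul_of_nonneg_left hamgm hβ.le
    rw [h1]
    calc d * (θ - σ / (P + Q)) ≤ |d| * θ := hstep1
      _ ≤ |d| * (2 * β) := h2
      _ ≤ β * (a + d ^ 2 / a) := h3
      _ = β * a + β * (d ^ 2 / a) := by ring
  rw [mul_assoc, ← Real.exp_add, mul_assoc, ← Real.exp_add]
  apply mul_le_mul_of_nonneg_left _ (inv_nonneg.mpr (norm_nonneg _))
  apply Real.exp_le_exp.mpr
  rw [hPQ]
  have hρd : ρ * d ^ 2 / a = ρ * (d ^ 2 / a) := by ring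
  have hρtd : ρt * d ^ 2 / a = ρt * (d ^ 2 / a) := by ring
  have hσd : σ * (-d / (P + Q)) = -(σ * d / (P + Q)) := by ring
  rw [hρd, hρtd, hσd]
  have hθv : θ * ‖v‖ ^ 2 - θ * ‖u‖ ^ 2 = θ * d := by rw [hd_def]; ring
  rw [hθv]
  linarith [hkey]
end

section
/- For every ρ > 0 there exists a constant C > 0 such that for all v ∈ ℝ³: ∫_{ℝ³} k_ρ(v,u) du ≤ C · ⟨v⟩^{-1}. -/
open MeasureTheory

open Real Set
open scoped RealInnerProductSpace

noncomputable section

namespace KkerAux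

abbrev E3 := EuclideanSpace ℝ (Fin 3)

/-- The intermediate majorant after completing squares. -/
def maj (ρ : ℝ) (v w : E3) : ℝ :=
  ‖w‖⁻¹ * Real.exp (-(ρ/4) * ‖w‖ ^ 2 - ρ * |⟪v, w⟫|)

/-- The rotated majorant. -/
def Phi (ρ a : ℝ) (x : E3) : ℝ :=
  ‖x‖⁻¹ * Real.exp (-(ρ/4) * ‖x‖ ^ 2 - ρ * (a * |x 0|))

/-- 1D factor carrying the decay in `a`. -/
def f0 (ρ a : ℝ) (t : ℝ) : ℝ := Real.exp (-(ρ/4) * |t| ^ 2 - ρ * (a * |t|))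

/-- 1D singular factor. -/
def f1 (ρ : ℝ) (t : ℝ) : ℝ := |t| ^ (-(1:ℝ)/2) * Real.exp (-(ρ/4) * |t| ^ 2)

lemma key_ineq (ρ : ℝ) (hρ : 0 < ρ) {r : ℝ} (hr : 0 < r) (c : ℝ) :
    -ρ * r ^ 2 - ρ * (r ^ 2 + 2*c) ^ 2 / r ^ 2 ≤ -(ρ/4) * r ^ 2 - ρ * |c| := by
  have hr2 : (0:ℝ) < r ^ 2 := by positivity
  have key : r ^ 2 / 4 + |c| - r ^ 2 ≤ (r ^ 2 + 2*c) ^ 2 / r ^ 2 := by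
    rw [le_div_iff₀ hr2]
    nlinarith [sq_abs c, le_abs_self c, neg_abs_le c, abs_nonneg c,
      sq_nonneg (8*c + 5*r^2), sq_nonneg (r^2 - 2*|c|), sq_nonneg (r^2 + 2*c)]
  have h2 := mul_le_mul_of_nonneg_left key hρ.le
  rw [mul_div_assoc]
  linarith

end KkerAux

namespace KkerAux

variable {ρ a : ℝ}

lemma integrable_even {F : ℝ → ℝ} (h : IntegrableOn (fun t => F |t|) (Ioi 0)) :
    Integrable (fun t => F |t|) := by
  rw [← integrableOn_univ, ← Iic_union_Ioi (a := (0:ℝ)), integrableOn_union]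
  refine ⟨?_, h⟩
  rw [← Measure.map_neg_eq_self (volume : Measure ℝ)]
  have m : MeasurableEmbedding fun x : ℝ => -x := (Homeomorph.neg ℝ).measurableEmbedding
  rw [m.integrableOn_map_iff]
  simp_rw [Function.comp_def, abs_neg, neg_preimage, neg_Iic, neg_zero]
  exact Iff.mpr integrableOn_Ici_iff_integrableOn_Ioi h

lemma f1_integrable (hρ : 0 < ρ) : Integrable (f1 ρ) := by
  have hb : (0:ℝ) < ρ/4 := by linarith
  have h0 : IntegrableOn (fun x : ℝ => x ^ (-(1:ℝ)/2) * Real.exp (-(ρ/4) * x ^ 2)) (Ioi 0) :=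
    integrableOn_rpow_mul_exp_neg_mul_sq hb (by norm_num)
  have h1 : IntegrableOn
      (fun t : ℝ => |t| ^ (-(1:ℝ)/2) * Real.exp (-(ρ/4) * |t| ^ 2)) (Ioi 0) :=
    h0.congr_fun (fun x hx => by rw [abs_of_pos hx]) measurableSet_Ioi
  exact integrable_even (F := fun s => s ^ (-(1:ℝ)/2) * Real.exp (-(ρ/4) * s ^ 2)) h1

lemma f1_nonneg (t : ℝ) : 0 ≤ f1 ρ t := by
  unfold f1; positivity

lemma f0_nonneg (t : ℝ) : 0 ≤ f0 ρ a t := (Real.exp_pos _).le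

lemma f0_le_gauss_ptwise (hρ : 0 < ρ) (ha : 0 ≤ a) (t : ℝ) :
    f0 ρ a t ≤ Real.exp (-(ρ/4) * t ^ 2) := by
  apply Real.exp_le_exp.2
  rw [sq_abs]
  have h1 : 0 ≤ ρ * (a * |t|) := by positivity
  linarith

lemma f0_integrable (hρ : 0 < ρ) (ha : 0 ≤ a) : Integrable (f0 ρ a) := by
  have hb : (0:ℝ) < ρ/4 := by linarith
  apply Integrable.mono' (integrable_exp_neg_mul_sq hb)
  · apply Measurable.aestronglyMeasurable
    unfold f0
    fun_prop
  · filter_upwards with t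
    rw [Real.norm_eq_abs, abs_of_pos (show (0:ℝ) < f0 ρ a t from Real.exp_pos _)]
    exact f0_le_gauss_ptwise hρ ha t

lemma f0_int_le_gauss (hρ : 0 < ρ) (ha : 0 ≤ a) :
    ∫ t, f0 ρ a t ≤ Real.sqrt (π / (ρ/4)) := by
  have hb : (0:ℝ) < ρ/4 := by linarith
  calc ∫ t, f0 ρ a t ≤ ∫ t : ℝ, Real.exp (-(ρ/4) * t ^ 2) := by
        apply integral_mono (f0_integrable hρ ha) (integrable_exp_neg_mul_sq hb)
        intro t
        exact f0_le_gauss_ptwise hρ ha t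
    _ = Real.sqrt (π / (ρ/4)) := integral_gaussian (ρ/4)

lemma f0_int_decay (hρ : 0 < ρ) (ha : 0 < a) :
    ∫ t, f0 ρ a t ≤ 2 * (ρ * a)⁻¹ := by
  have hc : 0 < ρ * a := mul_pos hρ ha
  have hgi : Integrable (fun t : ℝ => Real.exp (-(ρ*a) * |t|)) := by
    apply integrable_even (F := fun s => Real.exp (-(ρ*a) * s))
    exact (exp_neg_integrableOn_Ioi 0 hc).congr_fun
      (fun x hx => by rw [abs_of_pos hx]) measurableSet_Ioi
  have hle : ∀ t, f0 ρ a t ≤ Real.exp (-(ρ*a) * |t|) := by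
    intro t
    apply Real.exp_le_exp.2
    have h1 : 0 ≤ (ρ/4) * |t| ^ 2 := by positivity
    have e : ρ * (a * |t|) = ρ * a * |t| := by ring
    rw [neg_mul (ρ*a)]
    linarith
  have h2 := integral_mono (f0_integrable hρ ha.le) hgi hle
  have h3 : (∫ t : ℝ, Real.exp (-(ρ*a) * |t|)) = 2 * (ρ*a)⁻¹ := by
    rw [integral_comp_abs (f := fun x => Real.exp (-(ρ*a) * x))]
    have h4 := integral_comp_mul_left_Ioi (fun x => Real.exp (-x)) 0 hc
    simp only [mul_zero, neg_zero, integral_exp_neg_Ioi, Real.exp_zero, smul_eq_mul,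
      mul_one] at h4
    rw [← h4]
    congr 1
    apply setIntegral_congr_fun measurableSet_Ioi
    intro x _
    simp only [neg_mul]
  linarith [h2, h3.le, h3.ge]


lemma meas_apply (i : Fin 3) : Measurable fun x : E3 => x i :=
  (measurable_pi_apply i).comp (MeasurableEquiv.toLp 2 (Fin 3 → ℝ)).symm.measurable

lemma Phi_nonneg (x : E3) : 0 ≤ Phi ρ a x := by
  unfold Phi; positivity

lemma Phi_measurable : Measurable (Phi ρ a) := by
  apply Measurable.mul
  · exact measurable_norm.inv
  · apply Real.measurable_exp.comp
    apply Measurable.sub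
    · exact (measurable_norm.pow_const 2).const_mul _
    · exact (((meas_apply 0).abs.const_mul a).const_mul ρ)

/-- the three 1D factors -/
def F (ρ a : ℝ) : Fin 3 → ℝ → ℝ := fun i => if i = 0 then f0 ρ a else f1 ρ

lemma F_integrable (hρ : 0 < ρ) (ha : 0 ≤ a) (i : Fin 3) : Integrable (F ρ a i) := by
  unfold F
  split_ifs
  · exact f0_integrable hρ ha
  · exact f1_integrable hρ

lemma F_nonneg (i : Fin 3) (t : ℝ) : 0 ≤ F ρ a i t := by
  unfold F
  split_ifs
  · exact f0_nonneg t
  · exact f1_nonneg t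

lemma prod_integrable_pi (hρ : 0 < ρ) (ha : 0 ≤ a) :
    Integrable (fun y : Fin 3 → ℝ => ∏ i, F ρ a i (y i)) :=
  Integrable.fintype_prod (F_integrable hρ ha)

lemma prod_integrable (hρ : 0 < ρ) (ha : 0 ≤ a) :
    Integrable (fun x : E3 => ∏ i, F ρ a i (x i)) := by
  have h := (EuclideanSpace.volume_preserving_symm_measurableEquiv_toLp (Fin 3)).integrable_comp_emb
    (MeasurableEquiv.measurableEmbedding _)
    (g := fun y : Fin 3 → ℝ => ∏ i, F ρ a i (y i))
  exact h.2 (prod_integrable_pi hρ ha)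

lemma prod_integral (hρ : 0 < ρ) (ha : 0 ≤ a) :
    ∫ x : E3, ∏ i, F ρ a i (x i)
      = (∫ t, f0 ρ a t) * ((∫ t, f1 ρ t) * (∫ t, f1 ρ t)) := by
  have h := (EuclideanSpace.volume_preserving_symm_measurableEquiv_toLp (Fin 3)).integral_comp'
    (fun y : Fin 3 → ℝ => ∏ i, F ρ a i (y i))
  rw [show (∫ x : E3, ∏ i, F ρ a i (x i)) = ∫ x : E3,
    (fun y : Fin 3 → ℝ => ∏ i, F ρ a i (y i)) ((MeasurableEquiv.toLp 2 (Fin 3 → ℝ)).symm x) from rfl,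
    h, integral_fintype_prod_volume_eq_prod (ι := Fin 3) (F ρ a), Fin.prod_univ_three]
  have e0 : F ρ a 0 = f0 ρ a := by simp [F]
  have e1 : F ρ a 1 = f1 ρ := by simp [F]
  have e2 : F ρ a 2 = f1 ρ := by simp [F]
  rw [e0, e1, e2]
  ring

lemma coord_null (i : Fin 3) : volume {x : E3 | x i = 0} = 0 := by
  have hmp : MeasurePreserving (MeasurableEquiv.toLp 2 (Fin 3 → ℝ)).symm volume volume :=
    EuclideanSpace.volume_preserving_symm_measurableEquiv_toLp _
  have hs : MeasurableSet {y : Fin 3 → ℝ | y i = 0} :=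
    (measurable_pi_apply i) (measurableSet_singleton 0)
  have h1 : volume {x : E3 | x i = 0}
      = volume {y : Fin 3 → ℝ | y i = 0} := by
    rw [← hmp.measure_preimage hs.nullMeasurableSet]
    rfl
  rw [h1, volume_pi]
  exact Measure.pi_hyperplane _ i 0

lemma ae_coord_ne (i : Fin 3) : ∀ᵐ x : E3, x i ≠ 0 := by
  rw [ae_iff]
  simpa [not_not] using coord_null i

lemma Phi_ptwise (hρ : 0 < ρ) (ha : 0 ≤ a) {x : E3} (hx1 : x 1 ≠ 0) (hx2 : x 2 ≠ 0) :
    Phi ρ a x ≤ (Real.sqrt 2)⁻¹ * ∏ i, F ρ a i (x i) := by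
  have e0 : F ρ a 0 = f0 ρ a := by simp [F]
  have e1 : F ρ a 1 = f1 ρ := by simp [F]
  have e2 : F ρ a 2 = f1 ρ := by simp [F]
  rw [Fin.prod_univ_three, e0, e1, e2]
  have hnx : ‖x‖ ^ 2 = x 0 ^ 2 + x 1 ^ 2 + x 2 ^ 2 := by
    rw [EuclideanSpace.norm_eq, Real.sq_sqrt (by positivity)]
    simp [Fin.sum_univ_three, Real.norm_eq_abs, sq_abs]
  have habs1 : 0 < |x 1| := abs_pos.2 hx1
  have habs2 : 0 < |x 2| := abs_pos.2 hx2
  unfold Phi f0 f1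
  have hexp : Real.exp (-(ρ/4) * |x 0| ^ 2 - ρ * (a * |x 0|)) *
      (Real.exp (-(ρ/4) * |x 1| ^ 2) * Real.exp (-(ρ/4) * |x 2| ^ 2))
      = Real.exp (-(ρ/4) * ‖x‖ ^ 2 - ρ * (a * |x 0|)) := by
    rw [← Real.exp_add, ← Real.exp_add]
    congr 1
    rw [hnx, sq_abs, sq_abs, sq_abs]
    ring
  have hKpos : (0:ℝ) < Real.sqrt (2 * |x 1| * |x 2|) :=
    Real.sqrt_pos.2 (by positivity)
  have hinv : ‖x‖⁻¹ ≤ (Real.sqrt 2)⁻¹ * (|x 1| ^ (-(1:ℝ)/2) * |x 2| ^ (-(1:ℝ)/2)) := by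
    have er1 : |x 1| ^ (-(1:ℝ)/2) = (Real.sqrt |x 1|)⁻¹ := by
      rw [show (-(1:ℝ)/2) = -(1/2) by norm_num, Real.rpow_neg (abs_nonneg _),
        ← Real.sqrt_eq_rpow]
    have er2 : |x 2| ^ (-(1:ℝ)/2) = (Real.sqrt |x 2|)⁻¹ := by
      rw [show (-(1:ℝ)/2) = -(1/2) by norm_num, Real.rpow_neg (abs_nonneg _),
        ← Real.sqrt_eq_rpow]
    rw [er1, er2]
    have hprod : (Real.sqrt 2)⁻¹ * ((Real.sqrt |x 1|)⁻¹ * (Real.sqrt |x 2|)⁻¹)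
        = (Real.sqrt (2 * |x 1| * |x 2|))⁻¹ := by
      rw [Real.sqrt_mul (by positivity), Real.sqrt_mul (by norm_num)]
      rw [mul_inv, mul_inv]
      ring
    rw [hprod]
    apply inv_anti₀ hKpos
    rw [show ‖x‖ = Real.sqrt (‖x‖ ^ 2) from (Real.sqrt_sq (norm_nonneg x)).symm]
    apply Real.sqrt_le_sqrt
    rw [hnx]
    nlinarith [sq_nonneg (|x 1| - |x 2|), sq_abs (x 1), sq_abs (x 2), sq_nonneg (x 0)]
  calc ‖x‖⁻¹ * Real.exp (-(ρ/4) * ‖x‖ ^ 2 - ρ * (a * |x 0|))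
      ≤ ((Real.sqrt 2)⁻¹ * (|x 1| ^ (-(1:ℝ)/2) * |x 2| ^ (-(1:ℝ)/2))) *
        Real.exp (-(ρ/4) * ‖x‖ ^ 2 - ρ * (a * |x 0|)) := by
        exact mul_le_mul_of_nonneg_right hinv (Real.exp_pos _).le
    _ = (Real.sqrt 2)⁻¹ * (Real.exp (-(ρ/4) * |x 0| ^ 2 - ρ * (a * |x 0|)) *
        (|x 1| ^ (-(1:ℝ)/2) * Real.exp (-(ρ/4) * |x 1| ^ 2)) *
        (|x 2| ^ (-(1:ℝ)/2) * Real.exp (-(ρ/4) * |x 2| ^ 2))) := by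
        rw [← hexp]
        ring

lemma Phi_integrable (hρ : 0 < ρ) (ha : 0 ≤ a) : Integrable (Phi ρ a) := by
  have hG : Integrable (fun x : E3 => (Real.sqrt 2)⁻¹ * ∏ i, F ρ a i (x i)) :=
    (prod_integrable hρ ha).const_mul _
  apply Integrable.mono' hG Phi_measurable.aestronglyMeasurable
  filter_upwards [ae_coord_ne 1, ae_coord_ne 2] with x hx1 hx2
  rw [Real.norm_eq_abs, abs_of_nonneg (Phi_nonneg x)]
  exact Phi_ptwise hρ ha hx1 hx2

lemma Phi_integral_le (hρ : 0 < ρ) (ha : 0 ≤ a) :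
    ∫ x, Phi ρ a x ≤ (Real.sqrt 2)⁻¹ *
      ((∫ t, f0 ρ a t) * ((∫ t, f1 ρ t) * (∫ t, f1 ρ t))) := by
  have hG : Integrable (fun x : E3 => (Real.sqrt 2)⁻¹ * ∏ i, F ρ a i (x i)) :=
    (prod_integrable hρ ha).const_mul _
  have h1 : ∫ x, Phi ρ a x ≤ ∫ x : E3, (Real.sqrt 2)⁻¹ * ∏ i, F ρ a i (x i) := by
    apply integral_mono_ae (Phi_integrable hρ ha) hG
    filter_upwards [ae_coord_ne 1, ae_coord_ne 2] with x hx1 hx2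
    exact Phi_ptwise hρ ha hx1 hx2
  rw [integral_const_mul, prod_integral hρ ha] at h1
  exact h1


lemma kker_le_maj (hρ : 0 < ρ) (v u : E3) : kker ρ v u ≤ maj ρ v (u - v) := by
  by_cases h : u = v
  · subst h
    simp [kker, maj]
  · have hw : v - u ≠ 0 := sub_ne_zero.2 fun hvu => h hvu.symm
    have hr : 0 < ‖v - u‖ := norm_pos_iff.2 hw
    have hnorm : ‖u‖ ^ 2 = ‖v‖ ^ 2 + 2 * ⟪v, u - v⟫ + ‖v - u‖ ^ 2 := by
      calc ‖u‖ ^ 2 = ‖v + (u - v)‖ ^ 2 := by rw [add_sub_cancel]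
        _ = ‖v‖ ^ 2 + 2 * ⟪v, u - v⟫ + ‖u - v‖ ^ 2 := norm_add_sq_real v (u - v)
        _ = ‖v‖ ^ 2 + 2 * ⟪v, u - v⟫ + ‖v - u‖ ^ 2 := by rw [norm_sub_rev]
    unfold kker maj
    rw [norm_sub_rev u v]
    apply mul_le_mul_of_nonneg_left _ (inv_nonneg.2 (norm_nonneg _))
    apply Real.exp_le_exp.2
    have hq : (‖v‖ ^ 2 - ‖u‖ ^ 2) ^ 2 = (‖v - u‖ ^ 2 + 2 * ⟪v, u - v⟫) ^ 2 := by
      rw [hnorm]; ring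
    rw [hq]
    exact key_ineq ρ hρ hr ⟪v, u - v⟫

lemma maj_zero_eq : maj ρ (0 : E3) = Phi ρ 0 := by
  funext w
  simp [maj, Phi]

lemma maj_rot (hv : v ≠ 0) :
    ∃ T : E3 ≃ₗᵢ[ℝ] E3, ∀ x, maj ρ v (T x) = Phi ρ ‖v‖ x := by
  set u0 : E3 := ‖v‖⁻¹ • v with hu0def
  have hu0 : ‖u0‖ = 1 := norm_smul_inv_norm hv
  set e0 : E3 := EuclideanSpace.single 0 (1:ℝ) with he0def
  have he0 : ‖e0‖ = 1 := by simp [he0def, EuclideanSpace.norm_single]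
  refine ⟨Submodule.reflection (ℝ ∙ (e0 - u0))ᗮ, fun x => ?_⟩
  set T := Submodule.reflection (ℝ ∙ (e0 - u0))ᗮ with hTdef
  have hT : T e0 = u0 := Submodule.reflection_sub (by rw [he0, hu0])
  have hvT : v = ‖v‖ • T e0 := by
    rw [hT, hu0def, smul_inv_smul₀ (norm_ne_zero_iff.2 hv)]
  have hinner : ⟪v, T x⟫ = ‖v‖ * x 0 := by
    calc ⟪v, T x⟫ = ⟪‖v‖ • T e0, T x⟫ := by rw [← hvT]
      _ = ‖v‖ * ⟪T e0, T x⟫ := real_inner_smul_left _ _ _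
      _ = ‖v‖ * ⟪e0, x⟫ := by rw [LinearIsometryEquiv.inner_map_map]
      _ = ‖v‖ * x 0 := by
          rw [he0def, EuclideanSpace.inner_single_left]
          simp
  unfold maj Phi
  rw [hinner, LinearIsometryEquiv.norm_map, abs_mul, abs_of_nonneg (norm_nonneg v)]

lemma maj_int_eq (hρ : 0 < ρ) (v : E3) :
    Integrable (maj ρ v) ∧ ∫ w, maj ρ v w = ∫ x, Phi ρ ‖v‖ x := by
  by_cases hv : v = 0
  · subst hv
    rw [maj_zero_eq, norm_zero]
    exact ⟨Phi_integrable hρ le_rfl, rfl⟩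
  · obtain ⟨T, hT⟩ := maj_rot (ρ := ρ) hv
    have mpT : MeasurePreserving T volume volume := T.measurePreserving
    have embT : MeasurableEmbedding (T : E3 → E3) := by
      have := T.toHomeomorph.measurableEmbedding
      simpa using this
    have hcomp : (maj ρ v ∘ T) = Phi ρ ‖v‖ := funext hT
    constructor
    · have h1 := mpT.integrable_comp_emb embT (g := maj ρ v)
      apply h1.1
      rw [hcomp]
      exact Phi_integrable hρ (norm_nonneg v)
    · have h2 := mpT.integral_comp embT (maj ρ v)
      rw [← h2]
      exact integral_congr_ae (Filter.Eventually.of_forall fun x => hT x)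

lemma kker_measurable (ρ : ℝ) (v : E3) : Measurable (kker ρ v) := by
  unfold kker
  have h1 : Measurable fun u : E3 => ‖v - u‖ :=
    (continuous_const.sub continuous_id).norm.measurable
  have h2 : Measurable fun u : E3 => ‖u‖ := continuous_norm.measurable
  exact (h1.inv).mul (Real.measurable_exp.comp
    ((((h1.pow_const 2).const_mul (-ρ))).sub
      ((((h2.pow_const 2).const_sub _).pow_const 2).const_mul ρ |>.div (h1.pow_const 2))))

theorem main (ρ : ℝ) (hρ : 0 < ρ) :
    ∃ C > 0, ∀ v : E3,
      ∫ u, kker ρ v u ≤ C * (Real.sqrt (1 + ‖v‖ ^ 2))⁻¹ := by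
  set A := ∫ t, f1 ρ t with hAdef
  have hA : 0 ≤ A := integral_nonneg f1_nonneg
  set c1 := Real.sqrt (π / (ρ/4)) with hc1def
  have hc1 : 0 ≤ c1 := Real.sqrt_nonneg _
  set D := c1 + 2/ρ with hDdef
  have hD : 0 ≤ D := by positivity
  set K := (Real.sqrt 2)⁻¹ * (D * (A * A)) with hKdef
  have hK : 0 ≤ K := by positivity
  refine ⟨K + 1, by linarith, fun v => ?_⟩
  set a := ‖v‖ with hadef
  have ha : 0 ≤ a := norm_nonneg v
  have hsqp : (0:ℝ) < Real.sqrt (1 + a ^ 2) := Real.sqrt_pos.2 (by positivity)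
  have hB0 : 0 ≤ ∫ t, f0 ρ a t := integral_nonneg fun t => f0_nonneg t
  have hBD : (∫ t, f0 ρ a t) ≤ D / Real.sqrt (1 + a ^ 2) := by
    have hsq : Real.sqrt (1 + a ^ 2) ≤ 1 + a := by
      rw [show (1 + a : ℝ) = Real.sqrt ((1 + a) ^ 2) from
        (Real.sqrt_sq (by linarith)).symm]
      apply Real.sqrt_le_sqrt
      nlinarith
    have h1 : (∫ t, f0 ρ a t) * (1 + a) ≤ D := by
      have hle1 : (∫ t, f0 ρ a t) ≤ c1 := f0_int_le_gauss hρ ha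
      have hle2 : (∫ t, f0 ρ a t) * a ≤ 2/ρ := by
        rcases eq_or_lt_of_le ha with h | h
        · rw [← h, mul_zero]
          positivity
        · have := f0_int_decay hρ h
          have h3 := mul_le_mul_of_nonneg_right this ha
          calc (∫ t, f0 ρ a t) * a ≤ 2 * (ρ * a)⁻¹ * a := h3
            _ = 2/ρ := by field_simp
      have expand : (∫ t, f0 ρ a t) * (1 + a)
          = (∫ t, f0 ρ a t) + (∫ t, f0 ρ a t) * a := by ring
      rw [expand, hDdef]
      exact add_le_add hle1 hle2
    have hpos1 : (0:ℝ) < 1 + a := by linarith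
    have h2 : (∫ t, f0 ρ a t) ≤ D / (1 + a) := (le_div_iff₀ hpos1).2 h1
    have h3 : D / (1 + a) ≤ D / Real.sqrt (1 + a ^ 2) :=
      div_le_div_of_nonneg_left hD hsqp hsq
    linarith
  obtain ⟨hmajI, hmajE⟩ := maj_int_eq hρ v
  have hcomp : Integrable fun u : E3 => maj ρ v (u - v) := hmajI.comp_sub_right v
  have hkint : Integrable (kker ρ v) := by
    apply hcomp.mono' (kker_measurable ρ v).aestronglyMeasurable
    filter_upwards with u
    rw [Real.norm_eq_abs, abs_of_nonneg (by unfold kker; positivity)]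
    exact kker_le_maj hρ v u
  calc ∫ u, kker ρ v u ≤ ∫ u, maj ρ v (u - v) :=
        integral_mono hkint hcomp fun u => kker_le_maj hρ v u
    _ = ∫ w, maj ρ v w := integral_sub_right_eq_self (maj ρ v) v
    _ = ∫ x, Phi ρ a x := hmajE
    _ ≤ (Real.sqrt 2)⁻¹ * ((∫ t, f0 ρ a t) * (A * A)) := Phi_integral_le hρ ha
    _ ≤ (Real.sqrt 2)⁻¹ * ((D / Real.sqrt (1 + a ^ 2)) * (A * A)) := by
        apply mul_le_mul_of_nonneg_left _ (by positivity)
        exact mul_le_mul_of_nonneg_right hBD (by positivity)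
    _ = K * (Real.sqrt (1 + a ^ 2))⁻¹ := by
        rw [hKdef, div_eq_mul_inv]
        ring
    _ ≤ (K + 1) * (Real.sqrt (1 + a ^ 2))⁻¹ := by
        have h5 : (0:ℝ) ≤ (Real.sqrt (1 + a ^ 2))⁻¹ := by positivity
        nlinarith

end KkerAux

end

/-- Integral decay of the kernel: for every `ρ > 0` there is `C > 0` such that
`∫_{ℝ³} k_ρ(v,u) du ≤ C ⟨v⟩⁻¹` for all `v`, where `⟨v⟩ = √(1+|v|²)`. -/
theorem kker_integral_le (ρ : ℝ) (hρ : 0 < ρ) :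
    ∃ C > 0, ∀ v : EuclideanSpace ℝ (Fin 3),
      ∫ u, kker ρ v u ≤ C * (Real.sqrt (1 + ‖v‖ ^ 2))⁻¹ :=
  KkerAux.main ρ hρ
end
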